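/- Suppose there exists c ≥ 0 such that t_{X,β,q}[f] ≥ −c ∫₀^∞|f|² dx for all f in the domain of t_{X,β,q}. Then for every k ≥ 2 one has (1/d_k)(∫_{Δ_k} q(x) dx + 1/β_{k−1} + 1/β_k) ≥ −c, and for k = 1 one has (1/d_1)(∫_{Δ_1} q(x) dx + 1/β_1) ≥ −c. (This is the computation with the normalized indicator functions h_k = d_k^{−1/2} χ_{Δ_k} underlying the necessity of condition (1/d_k)(∫_{Δ_k} q dx + 1/β_{k−1} + 1/β_k) → ∞ for discreteness of the spectrum of H_{X,β,q}.) -/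

import Mathlib

open MeasureTheory Set Filter

noncomputable section

/-- A function that is *piecewise `H¹`* with respect to the partition points
`x 0 < x 1 < x 2 < ⋯` of `[0,∞)`: on each interval `Δ_{k+1} = [x k, x (k+1)]` it is
absolutely continuous with derivative `f' ∈ L²`, encoded via the fundamental
theorem of calculus; `fr k = f(x k +)` and `fl (k+1) = f(x (k+1) −)` are the
one-sided limits at the nodes. -/
structure PW1 (x : ℕ → ℝ) where
  f : ℝ → ℝ
  f' : ℝ → ℝ
  fr : ℕ → ℝ
  fl : ℕ → ℝ
  int_d : ∀ k, IntegrableOn f' (Icc (x k) (x (k + 1))) volume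
  sq_d : ∀ k, IntegrableOn (fun t => f' t ^ 2) (Icc (x k) (x (k + 1))) volume
  ftc : ∀ k, ∀ t ∈ Ioo (x k) (x (k + 1)), f t = fr k + ∫ s in Ioc (x k) t, f' s
  fl_eq : ∀ k, fl (k + 1) = fr k + ∫ s in Ioc (x k) (x (k + 1)), f' s

/-- The jump `f(x_{k+1}+) − f(x_{k+1}−)` of a piecewise `H¹` function at the
interior node `x (k+1)` (the paper's node `x_{k+1}`). -/
def PW1.jump {x : ℕ → ℝ} (F : PW1 x) (k : ℕ) : ℝ := F.fr (k + 1) - F.fl (k + 1)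

/-- Membership in the domain of the form `t_{X,β,q}`: `f ∈ L²(0,∞)`,
`∫₀^∞ |f'|² < ∞`, `∫₀^∞ |q| |f|² < ∞` and `Σ_k |f(x_k+) − f(x_k−)|²/|β_k| < ∞`. -/
def MemDom (x : ℕ → ℝ) (q : ℝ → ℝ) (β : ℕ → ℝ) (F : PW1 x) : Prop :=
  IntegrableOn (fun t => F.f t ^ 2) (Ioi 0) volume ∧
  IntegrableOn (fun t => F.f' t ^ 2) (Ioi 0) volume ∧
  IntegrableOn (fun t => |q t| * F.f t ^ 2) (Ioi 0) volume ∧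
  Summable (fun k => F.jump k ^ 2 / |β (k + 1)|)

/-- The value of the quadratic form
`t_{X,β,q}[f] = ∫₀^∞ (|f'|² + q |f|²) dx + Σ_k |f(x_k+) − f(x_k−)|²/β_k`. -/
def formVal (x : ℕ → ℝ) (q : ℝ → ℝ) (β : ℕ → ℝ) (F : PW1 x) : ℝ :=
  (∫ t in Ioi (0 : ℝ), (F.f' t ^ 2 + q t * F.f t ^ 2)) +
    ∑' k, F.jump k ^ 2 / β (k + 1)


/-- The test function: the indicator of the interval `Δ_{m+1} = (x m, x (m+1))`,
as a piecewise `H¹` function. -/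
def testF (x : ℕ → ℝ) (hmono : StrictMono x) (m : ℕ) : PW1 x where
  f := (Ioo (x m) (x (m + 1))).indicator (fun _ => (1 : ℝ))
  f' := fun _ => 0
  fr := fun k => if k = m then 1 else 0
  fl := fun k => if k = m + 1 then 1 else 0
  int_d := fun _ => integrableOn_zero
  sq_d := fun k => by
    simpa using (integrableOn_zero :
      IntegrableOn (fun _ : ℝ => (0 : ℝ)) (Icc (x k) (x (k + 1))) volume)
  ftc := by
    intro k t ht
    have hval : (Ioo (x m) (x (m + 1))).indicator (fun _ => (1 : ℝ)) t
        = if k = m then 1 else 0 := by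
      by_cases h : k = m
      · subst h
        simp [indicator_of_mem ht]
      · have hdis : t ∉ Ioo (x m) (x (m + 1)) := by
          intro hm
          rcases Nat.lt_or_ge k m with h1 | h1
          · have hle : x (k + 1) ≤ x m := hmono.monotone (Nat.succ_le_of_lt h1)
            exact absurd (ht.2.trans_le hle) (not_lt.2 hm.1.le)
          · have h2 : m < k := lt_of_le_of_ne h1 (Ne.symm h)
            have hle : x (m + 1) ≤ x k := hmono.monotone (Nat.succ_le_of_lt h2)
            exact absurd (hm.2.trans_le hle) (not_lt.2 ht.1.le)
        simp [indicator_of_notMem hdis, h]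
    simp [hval]
  fl_eq := by intro k; simp

lemma testF_jump (x : ℕ → ℝ) (hmono : StrictMono x) (m k : ℕ) :
    (testF x hmono m).jump k
      = (if k + 1 = m then (1 : ℝ) else 0) - (if k = m then 1 else 0) := by
  simp [PW1.jump, testF]

/-- **The test-function computation behind Proposition 3.3**: if
`t_{X,β,q}[f] ≥ −c ‖f‖²` on its domain, then testing with the normalized
indicators `h_k = d_k^{-1/2} χ_{Δ_k}` gives
`(1/d_k)(∫_{Δ_k} q + 1/β_{k−1} + 1/β_k) ≥ −c` for `k ≥ 2` and
`(1/d_1)(∫_{Δ_1} q + 1/β_1) ≥ −c` for `k = 1`. -/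
theorem stmt_10 (x : ℕ → ℝ) (hx0 : x 0 = 0) (hmono : StrictMono x)
    (hxtop : Tendsto x atTop atTop)
    (q : ℝ → ℝ) (hq : ∀ a b : ℝ, 0 ≤ a → IntegrableOn q (Icc a b) volume)
    (β : ℕ → ℝ) (hβ : ∀ k, β (k + 1) ≠ 0)
    (c : ℝ) (hc : 0 ≤ c)
    (hsb : ∀ F : PW1 x, MemDom x q β F →
      formVal x q β F ≥ -c * ∫ t in Ioi (0 : ℝ), F.f t ^ 2) :
    ((1 / (x 1 - x 0)) * ((∫ t in Icc (x 0) (x 1), q t) + (β 1)⁻¹) ≥ -c) ∧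
    (∀ k, (1 / (x (k + 2) - x (k + 1))) *
      ((∫ t in Icc (x (k + 1)) (x (k + 2)), q t) + (β (k + 1))⁻¹ + (β (k + 2))⁻¹)
        ≥ -c) := by
  have hxnn : ∀ m, 0 ≤ x m := fun m => hx0 ▸ hmono.monotone (Nat.zero_le m)
  have hd : ∀ m, 0 < x (m + 1) - x m := fun m => sub_pos.2 (hmono (Nat.lt_succ_self m))
  have hsub : ∀ m, Ioo (x m) (x (m + 1)) ⊆ Ioi (0 : ℝ) :=
    fun m t ht => lt_of_le_of_lt (hxnn m) ht.1
  -- main estimate for the test function on `Δ_{m+1}`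
  have key : ∀ m : ℕ,
      (∫ t in Icc (x m) (x (m + 1)), q t) +
        (∑' k, (testF x hmono m).jump k ^ 2 / β (k + 1))
        ≥ -c * (x (m + 1) - x m) := by
    intro m
    set F := testF x hmono m with hF
    have hf : F.f = (Ioo (x m) (x (m + 1))).indicator (fun _ => (1 : ℝ)) := rfl
    have hf2 : (fun t => F.f t ^ 2)
        = (Ioo (x m) (x (m + 1))).indicator (fun _ => (1 : ℝ)) := by
      funext t
      by_cases h : t ∈ Ioo (x m) (x (m + 1)) <;> simp [hf, h]
    have hqind : (fun t => F.f' t ^ 2 + q t * F.f t ^ 2)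
        = (Ioo (x m) (x (m + 1))).indicator q := by
      funext t
      by_cases h : t ∈ Ioo (x m) (x (m + 1)) <;>
        simp [hF, testF, h]
    have hqabs : (fun t => |q t| * F.f t ^ 2)
        = (Ioo (x m) (x (m + 1))).indicator (fun t => |q t|) := by
      funext t
      by_cases h : t ∈ Ioo (x m) (x (m + 1)) <;> simp [hf, h]
    have hinter : Ioi (0 : ℝ) ∩ Ioo (x m) (x (m + 1)) = Ioo (x m) (x (m + 1)) :=
      inter_eq_self_of_subset_right (hsub m)
    -- membership in the form domain
    have hmem : MemDom x q β F := by
      refine ⟨?_, ?_, ?_, ?_⟩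
      · rw [hf2]
        exact (((integrable_indicator_iff measurableSet_Ioo).2
          (integrableOn_const measure_Ioo_lt_top.ne))).integrableOn
      · have : (fun t => F.f' t ^ 2) = fun _ => (0 : ℝ) := by
          funext t; simp [hF, testF]
        rw [this]; exact integrableOn_zero
      · rw [hqabs]
        exact (((integrable_indicator_iff measurableSet_Ioo).2
          (IntegrableOn.mono_set ((hq (x m) (x (m + 1)) (hxnn m)).abs)
            Ioo_subset_Icc_self))).integrableOn
      · refine summable_of_ne_finset_zero (s := Finset.range (m + 2)) ?_
        intro k hk
        simp only [Finset.mem_range, not_lt] at hk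
        rw [testF_jump]
        have h1 : k + 1 ≠ m := by omega
        have h2 : k ≠ m := by omega
        simp [h1, h2]
    have hest := hsb F hmem
    -- compute the norm integral
    have hnorm : (∫ t in Ioi (0 : ℝ), F.f t ^ 2) = x (m + 1) - x m := by
      rw [hf2, setIntegral_indicator measurableSet_Ioo, hinter]
      rw [setIntegral_const, measureReal_def, Real.volume_Ioo, smul_eq_mul, mul_one,
        ENNReal.toReal_ofReal (hd m).le]
    -- compute the potential integral
    have hqint : (∫ t in Ioi (0 : ℝ), (F.f' t ^ 2 + q t * F.f t ^ 2))
        = ∫ t in Icc (x m) (x (m + 1)), q t := by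
      rw [hqind, setIntegral_indicator measurableSet_Ioo, hinter,
        integral_Icc_eq_integral_Ioo]
    rw [formVal, hnorm, hqint] at hest
    exact hest
  constructor
  · -- the first interval, m = 0
    have h0 := key 0
    have htsum : (∑' k, (testF x hmono 0).jump k ^ 2 / β (k + 1)) = (β 1)⁻¹ := by
      rw [tsum_eq_single 0 (by
        intro k hk
        rw [testF_jump]
        simp [hk, Nat.succ_ne_zero])]
      rw [testF_jump]
      norm_num
    rw [htsum] at h0
    rw [ge_iff_le, one_div, ← div_eq_inv_mul, le_div_iff₀ (hd 0)]
    linarith [h0]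
  · -- interior intervals, m = k + 1
    intro j
    have h0 := key (j + 1)
    have htsum : (∑' k, (testF x hmono (j + 1)).jump k ^ 2 / β (k + 1))
        = (β (j + 1))⁻¹ + (β (j + 2))⁻¹ := by
      rw [tsum_eq_sum (s := {j, j + 1}) (by
        intro k hk
        simp only [Finset.mem_insert, Finset.mem_singleton, not_or] at hk
        rw [testF_jump]
        have h1 : k + 1 ≠ j + 1 := by omega
        have h2 : k ≠ j + 1 := hk.2
        simp [h1, h2, hk.1])]
      rw [Finset.sum_pair (by omega : j ≠ j + 1), testF_jump, testF_jump]
      have h1 : ¬(j = j + 1) := by omega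
      have h2 : ¬(j + 1 + 1 = j + 1) := by omega
      simp [h1, h2, one_div]
    rw [htsum] at h0
    rw [ge_iff_le, one_div, ← div_eq_inv_mul, le_div_iff₀ (hd (j + 1))]
    linarith [h0]

end
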